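/- Let f_1, …, f_N : ℝ^n → ℝ be differentiable functions and define Φ(u) = max_{1≤j≤N} f_j(u). Fix u ∈ ℝ^n and let Θ = { j : f_j(u) = Φ(u) } be the active index set at u. Suppose d = 0 minimizes over ℝ^n the function ψ(v) = max_{1≤j≤N} { f_j(u) + ⟨∇f_j(u), v⟩ } + (1/2)‖v‖², i.e., max_{1≤j≤N} { f_j(u) + ⟨∇f_j(u), v⟩ } + (1/2)‖v‖² ≥ Φ(u) for all v ∈ ℝ^n. Then u is a stationary point of Φ: for every direction d₁ ∈ ℝ^n, max_{j∈Θ} ⟨∇f_j(u), d₁⟩ ≥ 0. -/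

import Mathlib

open Finset
open scoped RealInnerProductSpace Classical

/-- If `d = 0` minimizes `ψ(v) = maxⱼ {fⱼ(u) + ⟨∇fⱼ(u), v⟩} + (1/2)‖v‖²`, i.e. the value of `ψ`
at any `v` is at least `Φ(u) = maxⱼ fⱼ(u)`, then `u` is a stationary point of `Φ`: for every
direction `d₁`, `max_{j ∈ Θ} ⟨∇fⱼ(u), d₁⟩ ≥ 0`, where `Θ` is the active index set at `u`. -/
theorem stationary_point_of_zero_direction
    (N n : ℕ) [NeZero N] (f : Fin N → EuclideanSpace ℝ (Fin n) → ℝ)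
    (hf : ∀ j, Differentiable ℝ (f j))
    (u : EuclideanSpace ℝ (Fin n))
    (hmin : ∀ v : EuclideanSpace ℝ (Fin n),
      Finset.univ.sup' Finset.univ_nonempty (fun j => f j u) ≤
        Finset.univ.sup' Finset.univ_nonempty (fun j => f j u + ⟪gradient (f j) u, v⟫) +
          (1 / 2) * ‖v‖ ^ 2) :
    ∀ d₁ : EuclideanSpace ℝ (Fin n),
      0 ≤ (Finset.univ.filter
            (fun j => f j u = Finset.univ.sup' Finset.univ_nonempty (fun i => f i u))).sup'
          (by
            obtain ⟨j, hj, hje⟩ :=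
              Finset.exists_mem_eq_sup' (Finset.univ_nonempty (α := Fin N)) (fun i => f i u)
            exact ⟨j, Finset.mem_filter.mpr ⟨hj, hje.symm⟩⟩)
          (fun j => ⟪gradient (f j) u, d₁⟫) := by
  intro d₁
  by_contra hcon
  push_neg at hcon
  set Φ := Finset.univ.sup' Finset.univ_nonempty (fun i => f i u) with hΦ
  set g : Fin N → EuclideanSpace ℝ (Fin n) := fun j => gradient (f j) u with hg
  set S := Finset.univ.filter (fun j => f j u = Φ) with hS
  have hSne : S.Nonempty := by
    obtain ⟨j, hj, hje⟩ :=
      Finset.exists_mem_eq_sup' (Finset.univ_nonempty (α := Fin N)) (fun i => f i u)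
    exact ⟨j, Finset.mem_filter.mpr ⟨hj, hje.symm⟩⟩
  set s := S.sup' hSne (fun j => ⟪g j, d₁⟫) with hs
  have hsneg : s < 0 := hcon
  set K : ℝ := Finset.univ.sup' Finset.univ_nonempty (fun j => |⟪g j, d₁⟫|) + ‖d₁‖ ^ 2 + 1
    with hK
  have hKbound : ∀ j, |⟪g j, d₁⟫| + ‖d₁‖ ^ 2 ≤ K := by
    intro j
    have := Finset.le_sup' (fun j => |⟪g j, d₁⟫|) (Finset.mem_univ j)
    nlinarith
  have hKpos : (0:ℝ) < K := by
    obtain ⟨j0, _⟩ := Finset.univ_nonempty (α := Fin N)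
    have h0 : (0:ℝ) ≤ Finset.univ.sup' Finset.univ_nonempty (fun j => |⟪g j, d₁⟫|) :=
      le_trans (abs_nonneg _) (Finset.le_sup' (fun j => |⟪g j, d₁⟫|) (Finset.mem_univ j0))
    rw [hK]
    nlinarith [sq_nonneg ‖d₁‖]
  set δ : ℝ := Finset.univ.inf' Finset.univ_nonempty
    (fun j => if f j u = Φ then 1 else Φ - f j u) with hδ
  have hδpos : 0 < δ := by
    rw [hδ, Finset.lt_inf'_iff]
    intro j _
    by_cases hj : f j u = Φ
    · simp [hj]
    · have hle : f j u ≤ Φ := Finset.le_sup' (fun i => f i u) (Finset.mem_univ j)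
      simp [hj]
      exact lt_of_le_of_ne hle hj
  have hδle : ∀ j, f j u ≠ Φ → δ ≤ Φ - f j u := by
    intro j hj
    have h := Finset.inf'_le (fun j => if f j u = Φ then 1 else Φ - f j u) (Finset.mem_univ j)
    rw [if_neg hj] at h
    exact h
  set t : ℝ := min (-s / (‖d₁‖ ^ 2 + 1)) (min 1 (δ / (2 * K))) with ht
  have hd1 : (0:ℝ) < ‖d₁‖ ^ 2 + 1 := by positivity
  have htpos : 0 < t := by
    apply lt_min
    · exact div_pos (by linarith) hd1
    · exact lt_min one_pos (div_pos hδpos (by linarith))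
  have ht1 : t ≤ 1 := le_trans (min_le_right _ _) (min_le_left _ _)
  have ht2 : t ≤ δ / (2 * K) := le_trans (min_le_right _ _) (min_le_right _ _)
  have ht3 : t * (‖d₁‖ ^ 2 + 1) ≤ -s := by
    have := min_le_left (-s / (‖d₁‖ ^ 2 + 1)) (min 1 (δ / (2 * K)))
    calc t * (‖d₁‖ ^ 2 + 1) ≤ (-s / (‖d₁‖ ^ 2 + 1)) * (‖d₁‖ ^ 2 + 1) := by
          exact mul_le_mul_of_nonneg_right this (le_of_lt hd1)
      _ = -s := by field_simp
  clear_value Φ s K δ t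
  have hmain := hmin (t • d₁)
  have hnorm : ‖t • d₁‖ ^ 2 = t ^ 2 * ‖d₁‖ ^ 2 := by
    rw [norm_smul]; rw [Real.norm_eq_abs, abs_of_pos htpos]; ring
  have hlt : Finset.univ.sup' Finset.univ_nonempty (fun j => f j u + ⟪g j, t • d₁⟫) <
      Φ - (1 / 2) * ‖t • d₁‖ ^ 2 := by
    rw [Finset.sup'_lt_iff]
    intro j _
    have hinner : ⟪g j, t • d₁⟫ = t * ⟪g j, d₁⟫ := real_inner_smul_right _ _ _
    rw [hinner, hnorm]
    by_cases hj : f j u = Φ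
    · have hjS : j ∈ S := Finset.mem_filter.mpr ⟨Finset.mem_univ j, hj⟩
      have hle : ⟪g j, d₁⟫ ≤ s := by
        rw [hs]; exact Finset.le_sup' (fun j => ⟪g j, d₁⟫) hjS
      have : t * (s + t * ‖d₁‖ ^ 2 / 2) < 0 := by
        apply mul_neg_of_pos_of_neg htpos
        nlinarith [sq_nonneg ‖d₁‖]
      nlinarith
    · have h1 : δ ≤ Φ - f j u := hδle j hj
      have h2 : |⟪g j, d₁⟫| + ‖d₁‖ ^ 2 ≤ K := hKbound j
      have h3 : ⟪g j, d₁⟫ ≤ |⟪g j, d₁⟫| := le_abs_self _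
      have h4 : t * K ≤ δ / 2 := by
        have h5 := mul_le_mul_of_nonneg_right ht2 (le_of_lt hKpos)
        have h6 : δ / (2 * K) * K = δ / 2 := by field_simp
        linarith
      have ht4 : t ^ 2 ≤ t := by nlinarith
      have hA : t * ⟪g j, d₁⟫ ≤ t * |⟪g j, d₁⟫| :=
        mul_le_mul_of_nonneg_left h3 htpos.le
      have hB : t ^ 2 * ‖d₁‖ ^ 2 ≤ t * ‖d₁‖ ^ 2 :=
        mul_le_mul_of_nonneg_right ht4 (sq_nonneg _)
      have hC : t * |⟪g j, d₁⟫| + t * ‖d₁‖ ^ 2 ≤ t * K := by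
        have h7 := mul_le_mul_of_nonneg_left h2 htpos.le
        linarith [mul_add t (|⟪g j, d₁⟫|) (‖d₁‖ ^ 2)]
      have hX0 : (0:ℝ) ≤ t ^ 2 * ‖d₁‖ ^ 2 := mul_nonneg (sq_nonneg t) (sq_nonneg ‖d₁‖)
      linarith only [hA, hB, hC, hX0, h4, h1, hδpos]
  linarith [hmain, hlt]
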